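/- Let M be a finitely generated ℤ[t]-module of exponent 2ⁿ which has length one. Then every ℤ[t]-submodule of M has length one. -/

import Mathlib

/-- An `R`-module `M` has *length one* if there is a short exact sequence
`0 → F₁ → F₀ → M → 0` with `F₀`, `F₁` finitely generated free `R`-modules. -/
def IsLengthOne (R M : Type*) [CommRing R] [AddCommGroup M] [Module R M] : Prop :=
  ∃ (k l : ℕ) (f : (Fin k → R) →ₗ[R] (Fin l → R)) (g : (Fin l → R) →ₗ[R] M),
    Function.Injective f ∧ Function.Surjective g ∧ LinearMap.range f = LinearMap.ker g

namespace LengthOneAux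

open Polynomial

local notation "R" => Polynomial ℤ

lemma prime_two : Prime (2 : R) := by
  have h : ((C 2 : R)) = (2 : R) := by simp
  rw [← h, Polynomial.prime_C_iff]
  exact Int.prime_two

/-- Property (C): no nonzero element killed by `2` and by an odd polynomial. -/
def PropC (N : Type*) [AddCommGroup N] [Module R N] : Prop :=
  ∀ x : N, (2 : R) • x = 0 → ∀ q : R, q • x = 0 → ¬ ((2 : R) ∣ q) → x = 0

lemma propC_of_isLengthOne (M : Type*) [AddCommGroup M] [Module R M]
    (hM : IsLengthOne R M) : PropC M := by
  obtain ⟨k, l, f, g, hf, hg, hfg⟩ := hM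
  intro x h2 q hq hodd
  obtain ⟨v, rfl⟩ := hg x
  have h2v : (2 : R) • v ∈ LinearMap.ker g := by
    rw [LinearMap.mem_ker, map_smul, h2]
  have hqv : q • v ∈ LinearMap.ker g := by
    rw [LinearMap.mem_ker, map_smul, hq]
  rw [← hfg] at h2v hqv
  obtain ⟨a, ha⟩ := h2v
  obtain ⟨b, hb⟩ := hqv
  have key : q • a = (2 : R) • b := by
    apply hf
    rw [map_smul, map_smul, ha, hb, smul_comm]
  have hdvd : ∀ i, (2 : R) ∣ a i := by
    intro i
    have h1 : q * a i = 2 * b i := by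
      have := congrFun key i
      simpa [Pi.smul_apply, smul_eq_mul] using this
    have h2d : (2 : R) ∣ q * a i := ⟨b i, h1⟩
    exact (prime_two.dvd_or_dvd h2d).resolve_left hodd
  choose a' ha' using hdvd
  have hfa : f a' = v := by
    have h2' : (2 : R) • f a' = (2 : R) • v := by
      rw [← ha, ← map_smul]
      congr 1
      funext i
      simp [Pi.smul_apply, smul_eq_mul, ha' i]
    funext i
    have := congrFun h2' i
    simp only [Pi.smul_apply, smul_eq_mul] at this
    exact mul_left_cancel₀ (two_ne_zero) this
  have : v ∈ LinearMap.ker g := by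
    rw [← hfg]; exact ⟨a', hfa⟩
  exact this

/-- For an f.g. module `A` killed by `2` with property (C), there is a surjection
`R^c → A` whose kernel is exactly `2 R^c`. -/
lemma exists_basis_mod2 (A : Type*) [AddCommGroup A] [Module R A] [Module.Finite R A]
    (h2 : ∀ x : A, (2 : R) • x = 0) (hC : PropC A) :
    ∃ (c : ℕ) (e : (Fin c → R) →ₗ[R] A), Function.Surjective e ∧
      ∀ r : Fin c → R, e r = 0 ↔ ∀ i, (2 : R) ∣ r i := by
  classical
  set I : Ideal R := Ideal.span {(2 : R)} with hI
  have htors : Module.IsTorsionBy R A (2 : R) := h2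
  letI : Module (R ⧸ I) A := htors.module
  have hmk : ∀ (b : R) (x : A), Ideal.Quotient.mk I b • x = b • x :=
    fun b x => Module.IsTorsionBy.mk_smul htors b x
  -- `R ⧸ I` is a PID domain (it is `𝔽₂[t]`)
  haveI hmax : (Ideal.span {(2 : ℤ)}).IsMaximal :=
    PrincipalIdealRing.isMaximal_of_irreducible Int.prime_two.irreducible
  letI : Field (ℤ ⧸ Ideal.span {(2 : ℤ)}) := Ideal.Quotient.field _
  have hmapI : Ideal.map (C : ℤ →+* R) (Ideal.span {(2 : ℤ)}) = I := by
    rw [Ideal.map_span, Set.image_singleton]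
    norm_num [hI]
  have E : Polynomial (ℤ ⧸ Ideal.span {(2 : ℤ)}) ≃+* R ⧸ I := by
    have := Ideal.polynomialQuotientEquivQuotientPolynomial (Ideal.span {(2 : ℤ)})
    rwa [hmapI] at this
  haveI : IsDomain (R ⧸ I) := E.symm.toMulEquiv.isDomain _
  haveI : IsPrincipalIdealRing (R ⧸ I) :=
    IsPrincipalIdealRing.of_surjective E.toRingHom E.surjective
  -- torsion-freeness over `R ⧸ I`
  haveI : NoZeroSMulDivisors (R ⧸ I) A := by
    refine ⟨fun {z x} hzx => ?_⟩
    obtain ⟨q, rfl⟩ := Ideal.Quotient.mk_surjective z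
    rw [hmk] at hzx
    by_cases hq : (2 : R) ∣ q
    · left
      rw [Ideal.Quotient.eq_zero_iff_mem, hI, Ideal.mem_span_singleton]
      exact hq
    · right
      exact hC x (h2 x) q hzx hq
  -- finiteness over `R ⧸ I`
  haveI : Module.Finite (R ⧸ I) A := by
    obtain ⟨s, hs⟩ := Module.finite_def.mp (inferInstance : Module.Finite (Polynomial ℤ) A)
    refine ⟨⟨s, ?_⟩⟩
    rw [Submodule.eq_top_iff']
    intro x
    have hx : x ∈ Submodule.span R (s : Set A) := by rw [hs]; trivial
    refine Submodule.span_induction ?_ ?_ ?_ ?_ hx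
    · exact fun y hy => Submodule.subset_span hy
    · exact Submodule.zero_mem _
    · exact fun y z _ _ hy hz => Submodule.add_mem _ hy hz
    · intro r y _ hy
      have : r • y = Ideal.Quotient.mk I r • y := (hmk r y).symm
      rw [this]
      exact Submodule.smul_mem _ _ hy
  haveI : Module.Free (R ⧸ I) A := Module.free_of_finite_type_torsion_free'
  let ι := Module.Free.ChooseBasisIndex (R ⧸ I) A
  let b0 : Module.Basis ι (R ⧸ I) A := Module.Free.chooseBasis (R ⧸ I) A
  let c : ℕ := Fintype.card ι
  let b : Module.Basis (Fin c) (R ⧸ I) A := b0.reindex (Fintype.equivFin ι)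
  let e : (Fin c → R) →ₗ[R] A :=
      { toFun := fun r => ∑ i, r i • b i
        map_add' := by
          intro r s
          simp [add_smul, Finset.sum_add_distrib]
        map_smul' := by
          intro q r
          simp only [Pi.smul_apply, smul_eq_mul, RingHom.id_apply, Finset.smul_sum]
          congr 1
          funext i
          rw [mul_smul] }
  have he : ∀ r : Fin c → R, e r = ∑ i, r i • b i := fun r => rfl
  refine ⟨c, e, ?_, ?_⟩
  · intro x
    refine ⟨fun i => (Ideal.Quotient.mk_surjective (b.repr x i)).choose, ?_⟩
    rw [he]
    calc ∑ i, (Ideal.Quotient.mk_surjective (b.repr x i)).choose • b i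
        = ∑ i, b.repr x i • b i := by
          refine Finset.sum_congr rfl fun i _ => ?_
          rw [← hmk]
          rw [(Ideal.Quotient.mk_surjective (b.repr x i)).choose_spec]
      _ = x := b.sum_repr x
  · intro r
    constructor
    · intro hr
      rw [he] at hr
      have hr' : ∑ i, Ideal.Quotient.mk I (r i) • b i = 0 := by
        rw [show (∑ i, Ideal.Quotient.mk I (r i) • b i) = ∑ i, r i • b i from
          Finset.sum_congr rfl fun i _ => hmk _ _]
        exact hr
      intro i
      have := Fintype.linearIndependent_iff.mp b.linearIndependent _ hr' i
      rwa [Ideal.Quotient.eq_zero_iff_mem, hI, Ideal.mem_span_singleton] at this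
    · intro hdvd
      rw [he]
      refine Finset.sum_eq_zero fun i _ => ?_
      obtain ⟨s, hs⟩ := hdvd i
      rw [hs, mul_comm, mul_smul, h2 (b i), smul_zero]

end LengthOneAux

namespace LengthOneAux

open Polynomial

local notation "R" => Polynomial ℤ

lemma isLengthOne_of_propC (n : ℕ) :
    ∀ (N : Type*) [AddCommGroup N] [Module R N] [Module.Finite R N],
      (∀ x : N, (2 : R) ^ n • x = 0) → PropC N → IsLengthOne R N := by
  induction n with
  | zero =>
    intro N _ _ _ hexp _
    have hN : ∀ x : N, x = 0 := by
      intro x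
      have := hexp x
      rwa [pow_zero, one_smul] at this
    refine ⟨0, 0, 0, 0, ?_, ?_, ?_⟩
    · intro a b _
      exact Subsingleton.elim a b
    · intro x
      exact ⟨0, ((hN x).trans (map_zero _).symm).symm⟩
    · ext x
      simp only [LinearMap.mem_range, LinearMap.mem_ker, map_zero]
      constructor
      · intro _; rfl
      · intro _; exact ⟨0, Subsingleton.elim _ _⟩
  | succ n ih =>
    intro N _ _ _ hexp hC
    classical
    haveI : IsNoetherian R N :=
      isNoetherian_of_isNoetherianRing_of_finite (Polynomial ℤ) N
    set K : Submodule R N := Submodule.torsionBy R N (2 : R) with hKdef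
    haveI : Module.Finite R K := Module.Finite.iff_fg.mpr (IsNoetherian.noetherian K)
    have hK2 : ∀ x : K, (2 : R) • x = 0 := Submodule.torsionBy_isTorsionBy (2 : R)
    have hCK : PropC K := by
      intro x h2 q hq hodd
      have h2' : (2 : R) • (x : N) = 0 := by
        rw [← Submodule.coe_smul]; exact congrArg _ h2
      have hq' : q • (x : N) = 0 := by
        rw [← Submodule.coe_smul]; exact congrArg _ hq
      exact Subtype.ext (hC (x : N) h2' q hq' hodd)
    obtain ⟨c, e0, he0s, he0k⟩ := exists_basis_mod2 K hK2 hCK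
    -- the quotient module
    let π : N →ₗ[R] N ⧸ K := K.mkQ
    have hπker : ∀ x : N, π x = 0 ↔ (2 : R) • x = 0 := by
      intro x
      rw [Submodule.mkQ_apply, Submodule.Quotient.mk_eq_zero, hKdef,
        Submodule.mem_torsionBy_iff]
    have hexp' : ∀ x : N ⧸ K, (2 : R) ^ n • x = 0 := by
      intro x
      obtain ⟨y, rfl⟩ := K.mkQ_surjective x
      rw [← map_smul]
      rw [show ((2:R)^n • y) = ((2:R)^n • y) from rfl]
      have : π ((2:R)^n • y) = 0 := by
        rw [hπker, smul_smul, ← pow_succ', hexp]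
      exact this
    have hC' : PropC (N ⧸ K) := by
      intro x h2 q hq hodd
      obtain ⟨y, rfl⟩ := K.mkQ_surjective x
      have h2y : (2 : R) • ((2 : R) • y) = 0 := by
        have : π ((2:R) • y) = 0 := by rw [map_smul]; exact h2
        rwa [hπker] at this
      have hqy : q • ((2 : R) • y) = 0 := by
        have : π (q • y) = 0 := by rw [map_smul]; exact hq
        rw [hπker] at this
        rw [smul_comm]
        exact this
      have : (2 : R) • y = 0 := hC _ h2y q hqy hodd
      have : π y = 0 := by rw [hπker]; exact this
      exact this
    obtain ⟨a, bb, f', g', hf'inj, hg'surj, hfg'⟩ := ih (N ⧸ K) hexp' hC'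
    -- lift g' to h : R^bb → N
    let Bb := Pi.basisFun R (Fin bb)
    let y : Fin bb → N := fun i => (K.mkQ_surjective (g' (Bb i))).choose
    have hy : ∀ i, π (y i) = g' (Bb i) := fun i => (K.mkQ_surjective (g' (Bb i))).choose_spec
    let h : (Fin bb → R) →ₗ[R] N := Bb.constr ℕ y
    have hπh : π ∘ₗ h = g' := by
      refine Bb.ext fun i => ?_
      rw [LinearMap.comp_apply, Module.Basis.constr_basis]
      exact hy i
    have hπh' : ∀ w, π (h w) = g' w := fun w => by rw [← hπh]; rfl
    -- h ∘ f' lands in K ; define θ and a lift τ with e0 ∘ τ = θ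
    have hmem : ∀ v : Fin a → R, (2 : R) • h (f' v) = 0 := by
      intro v
      rw [← hπker, hπh']
      have : f' v ∈ LinearMap.ker g' := by rw [← hfg']; exact ⟨v, rfl⟩
      exact this
    let θ : (Fin a → R) →ₗ[R] K :=
      LinearMap.codRestrict K (-(h ∘ₗ f')) (by
        intro v
        rw [hKdef, Submodule.mem_torsionBy_iff]
        simp only [LinearMap.neg_apply, LinearMap.comp_apply, smul_neg, hmem v, neg_zero])
    have hθ : ∀ v, ((θ v : N)) = -(h (f' v)) := fun v => rfl
    let Ba := Pi.basisFun R (Fin a)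
    let u0 : Fin a → (Fin c → R) := fun i => (he0s (θ (Ba i))).choose
    have hu0 : ∀ i, e0 (u0 i) = θ (Ba i) := fun i => (he0s (θ (Ba i))).choose_spec
    let τ : (Fin a → R) →ₗ[R] (Fin c → R) := Ba.constr ℕ u0
    have hτ : e0 ∘ₗ τ = θ := by
      refine Ba.ext fun i => ?_
      rw [LinearMap.comp_apply, Module.Basis.constr_basis]
      exact hu0 i
    have hτ' : ∀ v, e0 (τ v) = θ v := fun v => by rw [← hτ]; rfl
    -- the two maps
    let e : (Fin c → R) →ₗ[R] N := K.subtype ∘ₗ e0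
    have h2e : ∀ r, (2 : R) • e r = 0 := by
      intro r
      have := hK2 (e0 r)
      rw [show ((2:R) • e r) = ((((2:R) • e0 r : K)) : N) from rfl, this]
      rfl
    let G : (Fin c → R) × (Fin bb → R) →ₗ[R] N :=
      e ∘ₗ LinearMap.fst R _ _ + h ∘ₗ LinearMap.snd R _ _
    have hG : ∀ p : (Fin c → R) × (Fin bb → R), G p = e p.1 + h p.2 := fun p => rfl
    let F : (Fin c → R) × (Fin a → R) →ₗ[R] (Fin c → R) × (Fin bb → R) :=
      LinearMap.prod
        ((2 : R) • LinearMap.fst R _ _ + τ ∘ₗ LinearMap.snd R _ _)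
        (f' ∘ₗ LinearMap.snd R _ _)
    have hF : ∀ p : (Fin c → R) × (Fin a → R),
        F p = ((2 : R) • p.1 + τ p.2, f' p.2) := fun p => rfl
    -- injectivity of F
    have hFinj : Function.Injective F := by
      intro p p' hpp'
      have hpair : ((2:R) • p.1 + τ p.2, f' p.2) = ((2:R) • p'.1 + τ p'.2, f' p'.2) :=
        (hF p).symm.trans (hpp'.trans (hF p'))
      have h1 : (2:R) • p.1 + τ p.2 = (2:R) • p'.1 + τ p'.2 := congrArg Prod.fst hpair
      have h2 : f' p.2 = f' p'.2 := congrArg Prod.snd hpair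
      have h2' : p.2 = p'.2 := hf'inj h2
      rw [h2'] at h1
      have h1' : (2:R) • p.1 = (2:R) • p'.1 := by
        have := add_right_cancel h1
        exact this
      have : p.1 = p'.1 := by
        funext i
        have := congrFun h1' i
        simp only [Pi.smul_apply, smul_eq_mul] at this
        exact mul_left_cancel₀ two_ne_zero this
      exact Prod.ext this h2'
    -- surjectivity of G
    have hGsurj : Function.Surjective G := by
      intro z
      obtain ⟨w, hw⟩ := hg'surj (π z)
      have : π (z - h w) = 0 := by
        rw [map_sub, hπh', hw, sub_self]
      have hzK : z - h w ∈ K := by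
        rw [hKdef, Submodule.mem_torsionBy_iff]
        exact (hπker _).mp this
      obtain ⟨r, hr⟩ := he0s ⟨z - h w, hzK⟩
      refine ⟨(r, w), ?_⟩
      rw [hG]
      have : e r = z - h w := by
        rw [show e r = ((e0 r : K) : N) from rfl, hr]
      rw [this]
      abel
    -- range F = ker G
    have hFG : LinearMap.range F = LinearMap.ker G := by
      ext p
      simp only [LinearMap.mem_range, LinearMap.mem_ker]
      constructor
      · rintro ⟨q, rfl⟩
        simp only [hG, hF]
        rw [map_add, map_smul]
        have h1 : (2 : R) • e q.1 = 0 := h2e q.1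
        have h2 : e (τ q.2) = -(h (f' q.2)) := by
          rw [show e (τ q.2) = ((e0 (τ q.2) : K) : N) from rfl, hτ' q.2, hθ]
        rw [h1, h2]
        abel
      · intro hp
        rw [hG] at hp
        have hπe : π (e p.1) = 0 := by rw [hπker]; exact h2e p.1
        have hg'p2 : g' p.2 = 0 := by
          rw [← hπh']
          have h3 := congrArg π hp
          rw [map_add, map_zero, hπe, zero_add] at h3
          exact h3
        have hmem2 : p.2 ∈ LinearMap.range f' := by rw [hfg']; exact hg'p2
        obtain ⟨v, hv⟩ := hmem2
        have he0eq : e0 p.1 = e0 (τ v) := by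
          refine Subtype.ext ?_
          have h4 : (e0 p.1 : N) = -(h p.2) := by
            have : e p.1 = -(h p.2) := eq_neg_of_add_eq_zero_left hp
            exact this
          rw [hτ', hθ, hv, h4]
        have hker : e0 (p.1 - τ v) = 0 := by rw [map_sub, he0eq, sub_self]
        have hdvd := (he0k _).mp hker
        choose s hs using hdvd
        refine ⟨(s, v), ?_⟩
        have hfst : (2 : R) • s + τ v = p.1 := by
          funext i
          have h5 := hs i
          rw [Pi.sub_apply] at h5
          simp only [Pi.add_apply, Pi.smul_apply, smul_eq_mul]
          rw [← h5]
          ring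
        calc F (s, v) = ((2 : R) • s + τ v, f' v) := rfl
          _ = p := Prod.ext hfst hv
    -- assemble via the equivalences R^(c+a) ≃ R^c × R^a etc.
    let E1 : (Fin (c + a) → R) ≃ₗ[R] (Fin c → R) × (Fin a → R) :=
      (LinearEquiv.funCongrLeft (Polynomial ℤ) (Polynomial ℤ) finSumFinEquiv).trans
        (LinearEquiv.sumArrowLequivProdArrow _ _ (Polynomial ℤ) (Polynomial ℤ))
    let E2 : (Fin (c + bb) → R) ≃ₗ[R] (Fin c → R) × (Fin bb → R) :=
      (LinearEquiv.funCongrLeft (Polynomial ℤ) (Polynomial ℤ) finSumFinEquiv).trans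
        (LinearEquiv.sumArrowLequivProdArrow _ _ (Polynomial ℤ) (Polynomial ℤ))
    refine ⟨c + a, c + bb,
      ((E2.symm : (Fin c → R) × (Fin bb → R) →ₗ[R] (Fin (c + bb) → R)) ∘ₗ F) ∘ₗ
        (E1 : (Fin (c + a) → R) →ₗ[R] (Fin c → R) × (Fin a → R)),
      G ∘ₗ (E2 : (Fin (c + bb) → R) →ₗ[R] (Fin c → R) × (Fin bb → R)), ?_, ?_, ?_⟩
    · intro x y hxy
      have h6 : E2.symm (F (E1 x)) = E2.symm (F (E1 y)) := hxy
      exact E1.injective (hFinj (E2.symm.injective h6))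
    · rw [LinearMap.coe_comp]
      exact hGsurj.comp E2.surjective
    · rw [LinearMap.range_comp, LinearEquiv.range, Submodule.map_top,
        LinearMap.range_comp, hFG, LinearMap.ker_comp,
        Submodule.comap_equiv_eq_map_symm]

end LengthOneAux

/-- Let `M` be a finitely generated `ℤ[t]`-module of exponent `2ⁿ` which has length one.
Then every `ℤ[t]`-submodule of `M` has length one. -/
theorem submodule_isLengthOne
    (M : Type*) [AddCommGroup M] [Module (Polynomial ℤ) M]
    [Module.Finite (Polynomial ℤ) M]
    (n : ℕ) (hexp : ∀ x : M, (2 : Polynomial ℤ) ^ n • x = 0)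
    (hM : IsLengthOne (Polynomial ℤ) M)
    (N : Submodule (Polynomial ℤ) M) :
    IsLengthOne (Polynomial ℤ) N := by
  have hCM : LengthOneAux.PropC M := LengthOneAux.propC_of_isLengthOne M hM
  haveI : IsNoetherian (Polynomial ℤ) M :=
    isNoetherian_of_isNoetherianRing_of_finite (Polynomial ℤ) M
  haveI : Module.Finite (Polynomial ℤ) N :=
    Module.Finite.iff_fg.mpr (IsNoetherian.noetherian N)
  apply LengthOneAux.isLengthOne_of_propC n
  · intro x
    refine Subtype.ext ?_
    rw [Submodule.coe_smul]
    exact hexp (x : M)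
  · intro x h2 q hq hodd
    refine Subtype.ext ?_
    refine hCM (x : M) ?_ q ?_ hodd
    · rw [← Submodule.coe_smul, h2]; rfl
    · rw [← Submodule.coe_smul, hq]; rfl
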